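/- For any n×n complex matrices A and B, |Tr(AB)| ≤ Σ_{i=1}^n σ_i(A) σ_i(B), where σ_1 ≥ … ≥ σ_n denote singular values in decreasing order. (Von Neumann's trace inequality.) -/

import Mathlib

open Matrix

open Finset in

private lemma vN_ds_core {n : ℕ} {f g : Fin n → ℝ} (hf : Antitone f) (hg : Antitone g)
    {M : Matrix (Fin n) (Fin n) ℝ} (hM : M ∈ doublyStochastic ℝ (Fin n)) :
    ∑ i, ∑ j, f i * g j * M i j ≤ ∑ i, f i * g i := by
  have hmono : Monovary f g := by
    intro i j hij
    refine hf (le_of_not_gt fun h : i < j => ?_)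
    exact absurd (hg h.le) (not_le.2 hij)
  obtain ⟨w, hw0, hw1, hwM⟩ := exists_eq_sum_perm_of_mem_doublyStochastic hM
  have hperm : ∀ (σ : Equiv.Perm (Fin n)) i j,
      (σ.permMatrix ℝ) i j = if σ i = j then 1 else 0 := by
    intro σ i j
    simp [Equiv.Perm.permMatrix, PEquiv.toMatrix_apply, Equiv.toPEquiv_apply, eq_comm]
  have hentry : ∀ i j, M i j = ∑ σ : Equiv.Perm (Fin n), w σ * (if σ i = j then 1 else 0) := by
    intro i j
    rw [← hwM]
    simp [Matrix.sum_apply, Equiv.toPEquiv_apply]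
  calc ∑ i, ∑ j, f i * g j * M i j
      = ∑ i, ∑ j, ∑ σ : Equiv.Perm (Fin n), f i * g j * (w σ * (if σ i = j then 1 else 0)) := by
        simp only [hentry, Finset.mul_sum]
    _ = ∑ σ : Equiv.Perm (Fin n), ∑ i, ∑ j, f i * g j * (w σ * (if σ i = j then 1 else 0)) := by
        rw [show (∑ i, ∑ j, ∑ σ : Equiv.Perm (Fin n), f i * g j * (w σ * (if σ i = j then 1 else 0)))
            = ∑ i, ∑ σ : Equiv.Perm (Fin n), ∑ j, f i * g j * (w σ * (if σ i = j then 1 else 0))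
          from Finset.sum_congr rfl fun i _ => Finset.sum_comm]
        exact Finset.sum_comm
        -- fix
    _ = ∑ σ : Equiv.Perm (Fin n), w σ * ∑ i, f i * g (σ i) := by
        refine Finset.sum_congr rfl fun σ _ => ?_
        rw [Finset.mul_sum]
        refine Finset.sum_congr rfl fun i _ => ?_
        simp [mul_ite, Finset.sum_ite_eq]
        ring
    _ ≤ ∑ σ : Equiv.Perm (Fin n), w σ * ∑ i, f i * g i := by
        refine Finset.sum_le_sum fun σ _ => mul_le_mul_of_nonneg_left ?_ (hw0 σ)
        simpa [smul_eq_mul] using hmono.sum_smul_comp_perm_le_sum_smul (σ := σ)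
    _ = ∑ i, f i * g i := by rw [← Finset.sum_mul, hw1, one_mul]

open Finset in
private lemma vN_ds_transpose {n : ℕ} {M : Matrix (Fin n) (Fin n) ℝ}
    (hM : M ∈ doublyStochastic ℝ (Fin n)) : Mᵀ ∈ doublyStochastic ℝ (Fin n) := by
  rw [mem_doublyStochastic_iff_sum] at *
  exact ⟨fun i j => hM.1 j i, fun i => hM.2.2 i, fun j => hM.2.1 j⟩

private lemma vN_ds_submatrix {n : ℕ} {M : Matrix (Fin n) (Fin n) ℝ}
    (hM : M ∈ doublyStochastic ℝ (Fin n)) (e f : Equiv.Perm (Fin n)) :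
    M.submatrix e f ∈ doublyStochastic ℝ (Fin n) := by
  rw [mem_doublyStochastic_iff_sum] at *
  refine ⟨fun i j => hM.1 _ _, fun i => ?_, fun j => ?_⟩
  · rw [show ∑ j, M.submatrix e f i j = ∑ j, M (e i) (f j) from rfl,
      Equiv.sum_comp f (fun j => M (e i) j)]
    exact hM.2.1 _
  · rw [show ∑ i, M.submatrix e f i j = ∑ i, M (e i) (f j) from rfl,
      Equiv.sum_comp e (fun i => M i (f j))]
    exact hM.2.2 _

private lemma vN_unitary_ds {n : ℕ} {P : Matrix (Fin n) (Fin n) ℂ}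
    (hP : P ∈ Matrix.unitaryGroup (Fin n) ℂ) :
    (Matrix.of fun i j => ‖P i j‖ ^ 2) ∈ doublyStochastic ℝ (Fin n) := by
  rw [mem_doublyStochastic_iff_sum]
  have h1 : P * Pᴴ = 1 := by
    simpa [Matrix.star_eq_conjTranspose] using Matrix.mem_unitaryGroup_iff.mp hP
  have h2 : Pᴴ * P = 1 := by
    simpa [Matrix.star_eq_conjTranspose] using Matrix.mem_unitaryGroup_iff'.mp hP
  have key : ∀ (z : ℂ), z * star z = (‖z‖ : ℂ) ^ 2 := by
    intro z
    have h0 : z * star z = ((Complex.normSq z : ℝ) : ℂ) := Complex.mul_conj z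
    rw [h0, Complex.normSq_eq_norm_sq]
    push_cast
    ring
  refine ⟨fun i j => by simp only [Matrix.of_apply]; positivity, fun i => ?_, fun j => ?_⟩
  · have h := congrArg (fun M => M i i) h1
    simp only [Matrix.mul_apply, Matrix.conjTranspose_apply, Matrix.one_apply_eq] at h
    have : ((∑ k, ‖P i k‖ ^ 2 : ℝ) : ℂ) = 1 := by
      push_cast
      rw [← h]
      exact Finset.sum_congr rfl fun k _ => (key _).symm
    exact_mod_cast this
  · have h := congrArg (fun M => M j j) h2
    simp only [Matrix.mul_apply, Matrix.conjTranspose_apply, Matrix.one_apply_eq] at h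
    have : ((∑ k, ‖P k j‖ ^ 2 : ℝ) : ℂ) = 1 := by
      push_cast
      rw [← h]
      refine Finset.sum_congr rfl fun k _ => ?_
      rw [mul_comm]
      exact (key _).symm
    exact_mod_cast this

open Finset in
open scoped ComplexOrder in
private lemma vN_exists_svd {n : ℕ} (A : Matrix (Fin n) (Fin n) ℂ) :
    ∃ U V : Matrix (Fin n) (Fin n) ℂ,
      U ∈ Matrix.unitaryGroup (Fin n) ℂ ∧ V ∈ Matrix.unitaryGroup (Fin n) ℂ ∧
      A = U * Matrix.diagonal (fun i =>
        ((Real.sqrt ((Matrix.isHermitian_conjTranspose_mul_self A).eigenvalues i) : ℝ) : ℂ)) * Vᴴ := by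
  have hH := Matrix.isHermitian_conjTranspose_mul_self A
  set lam : Fin n → ℝ := hH.eigenvalues with hlamdef
  have hlam0 : ∀ i, 0 ≤ lam i := fun i =>
    (Matrix.posSemidef_conjTranspose_mul_self A).eigenvalues_nonneg i
  set v := hH.eigenvectorBasis with hvdef
  set w : Fin n → (Fin n → ℂ) := fun i => A *ᵥ ⇑(v i) with hwdef
  set c : Fin n → ℂ := fun i => ((Real.sqrt (lam i) : ℝ) : ℂ) with hcdef
  have hc_sq : ∀ i, c i * c i = (lam i : ℂ) := by
    intro i
    have h := Real.mul_self_sqrt (hlam0 i)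
    rw [hcdef]
    simp only
    exact_mod_cast congrArg Complex.ofReal h
  have hc_ne : ∀ i, lam i ≠ 0 → c i ≠ 0 := by
    intro i hi
    rw [hcdef]
    simpa using Real.sqrt_ne_zero'.mpr (lt_of_le_of_ne (hlam0 i) (Ne.symm hi))
  have hinner : ∀ (x y : EuclideanSpace ℂ (Fin n)),
      (inner ℂ x y : ℂ) = star (⇑x : Fin n → ℂ) ⬝ᵥ (⇑y : Fin n → ℂ) := fun x y => by
    rw [EuclideanSpace.inner_eq_star_dotProduct, dotProduct_comm]
  have horth : ∀ i j, star (⇑(v i) : Fin n → ℂ) ⬝ᵥ (⇑(v j) : Fin n → ℂ)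
      = if i = j then 1 else 0 := by
    intro i j
    rw [← hinner]
    exact orthonormal_iff_ite.mp v.orthonormal i j
  have key : ∀ i j, star (w i) ⬝ᵥ w j = ((lam j : ℂ)) * (if i = j then 1 else 0) := by
    intro i j
    rw [hwdef]
    simp only
    rw [Matrix.star_mulVec, ← Matrix.dotProduct_mulVec, Matrix.mulVec_mulVec,
      hH.mulVec_eigenvectorBasis j]
    rw [show (lam j • ⇑(v j) : Fin n → ℂ) = (lam j : ℂ) • (⇑(v j) : Fin n → ℂ) by
      funext k; simp [Complex.real_smul]]
    rw [dotProduct_smul, horth i j]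
    simp [smul_eq_mul]
  have hw_zero : ∀ i, lam i = 0 → w i = 0 := by
    intro i h0
    refine dotProduct_star_self_eq_zero.mp ?_
    rw [key i i]
    simp [h0]
  set u : Fin n → EuclideanSpace ℂ (Fin n) :=
    fun i => (WithLp.equiv 2 (Fin n → ℂ)).symm ((c i)⁻¹ • w i) with hudef
  have hu_apply : ∀ i k, (⇑(u i) : Fin n → ℂ) k = (c i)⁻¹ * w i k := fun i k => rfl
  have hu : Orthonormal ℂ (Set.restrict {i | lam i ≠ 0} u) := by
    rw [orthonormal_iff_ite]
    rintro ⟨i, hi⟩ ⟨j, hj⟩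
    rw [hinner]
    have hst : star (⇑(u i) : Fin n → ℂ) ⬝ᵥ (⇑(u j) : Fin n → ℂ)
        = (c i)⁻¹ * (c j)⁻¹ * (star (w i) ⬝ᵥ w j) := by
      simp only [dotProduct, Pi.star_apply, hu_apply, star_mul', Finset.mul_sum]
      refine Finset.sum_congr rfl fun k _ => ?_
      rw [show star ((c i)⁻¹) = (c i)⁻¹ by
        rw [hcdef]; simp [← map_inv₀, Complex.conj_ofReal]]
      ring
    change star (⇑(u i) : Fin n → ℂ) ⬝ᵥ (⇑(u j) : Fin n → ℂ) = _
    rw [hst, key i j]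
    by_cases hij : i = j
    · subst hij
      simp only [Subtype.mk_eq_mk, if_true, mul_one]
      have hc0 := hc_ne i hi
      field_simp
      exact (hc_sq i).symm.trans (sq (c i)).symm
    · simp [hij, Subtype.mk_eq_mk]
  obtain ⟨b, hb⟩ := hu.exists_orthonormalBasis_extension_of_card_eq
    (by simp [finrank_euclideanSpace])
  set U : Matrix (Fin n) (Fin n) ℂ := Matrix.of fun k i => (⇑(b i) : Fin n → ℂ) k with hUdef
  set V : Matrix (Fin n) (Fin n) ℂ := Matrix.of fun k i => (⇑(v i) : Fin n → ℂ) k with hVdef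
  have hborth : ∀ i j, star (⇑(b i) : Fin n → ℂ) ⬝ᵥ (⇑(b j) : Fin n → ℂ)
      = if i = j then 1 else 0 := by
    intro i j
    rw [← hinner]
    exact orthonormal_iff_ite.mp b.orthonormal i j
  have hUmem : U ∈ Matrix.unitaryGroup (Fin n) ℂ := by
    rw [Matrix.mem_unitaryGroup_iff']
    ext i j
    rw [Matrix.star_eq_conjTranspose]
    simp only [Matrix.mul_apply, Matrix.conjTranspose_apply, hUdef, Matrix.of_apply]
    rw [show ∑ k, star ((⇑(b i) : Fin n → ℂ) k) * (⇑(b j) : Fin n → ℂ) k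
        = star (⇑(b i) : Fin n → ℂ) ⬝ᵥ (⇑(b j) : Fin n → ℂ) from rfl, hborth i j]
    simp [Matrix.one_apply]
  have hVmem : V ∈ Matrix.unitaryGroup (Fin n) ℂ := by
    rw [Matrix.mem_unitaryGroup_iff']
    ext i j
    rw [Matrix.star_eq_conjTranspose]
    simp only [Matrix.mul_apply, Matrix.conjTranspose_apply, hVdef, Matrix.of_apply]
    rw [show ∑ k, star ((⇑(v i) : Fin n → ℂ) k) * (⇑(v j) : Fin n → ℂ) k
        = star (⇑(v i) : Fin n → ℂ) ⬝ᵥ (⇑(v j) : Fin n → ℂ) from rfl, horth i j]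
    simp [Matrix.one_apply]
  refine ⟨U, V, hUmem, hVmem, ?_⟩
  have hAV : A * V = U * Matrix.diagonal c := by
    ext k i
    rw [Matrix.mul_diagonal]
    have hAVki : (A * V) k i = w i k := by
      rw [Matrix.mul_apply, hwdef]
      simp only [Matrix.mulVec, dotProduct, hVdef, Matrix.of_apply]
    rw [hAVki, hUdef]
    by_cases h0 : lam i = 0
    · rw [hw_zero i h0]
      simp [hcdef, h0]
    · have hbi : b i = u i := hb i h0
      rw [Matrix.of_apply, hbi]
      rw [hu_apply]
      field_simp [hc_ne i h0]
  have hVV : V * Vᴴ = 1 := by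
    rw [← Matrix.star_eq_conjTranspose]
    exact Matrix.mem_unitaryGroup_iff.mp hVmem
  calc A = A * (V * Vᴴ) := by rw [hVV, mul_one]
    _ = (A * V) * Vᴴ := by rw [mul_assoc]
    _ = U * Matrix.diagonal c * Vᴴ := by rw [hAV]

/-- `σ` lists the singular values of the square complex matrix `A` in
nonincreasing order: it is an antitone enumeration of the square roots of the
eigenvalues of `Aᴴ * A`. -/
def IsSingularValueSeq {n : ℕ} (A : Matrix (Fin n) (Fin n) ℂ) (σ : Fin n → ℝ) : Prop :=
  Antitone σ ∧ ∃ e : Equiv.Perm (Fin n), ∀ i,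
    σ i = Real.sqrt ((Matrix.isHermitian_conjTranspose_mul_self A).eigenvalues (e i))

/-- Von Neumann's trace inequality. -/
theorem vonNeumann_trace_inequality {n : ℕ}
    (A B : Matrix (Fin n) (Fin n) ℂ) (σA σB : Fin n → ℝ)
    (hA : IsSingularValueSeq A σA) (hB : IsSingularValueSeq B σB) :
    ‖(A * B).trace‖ ≤ ∑ i, σA i * σB i := by
  obtain ⟨hAanti, eA, hσA⟩ := hA
  obtain ⟨hBanti, eB, hσB⟩ := hB
  obtain ⟨U, V, hU, hV, hAeq⟩ := vN_exists_svd A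
  obtain ⟨W, X, hW, hX, hBeq⟩ := vN_exists_svd B
  set gA : Fin n → ℝ :=
    fun i => Real.sqrt ((Matrix.isHermitian_conjTranspose_mul_self A).eigenvalues i) with hgA
  set gB : Fin n → ℝ :=
    fun i => Real.sqrt ((Matrix.isHermitian_conjTranspose_mul_self B).eigenvalues i) with hgB
  have hgA0 : ∀ i, 0 ≤ gA i := fun i => Real.sqrt_nonneg _
  have hgB0 : ∀ i, 0 ≤ gB i := fun i => Real.sqrt_nonneg _
  set P : Matrix (Fin n) (Fin n) ℂ := Vᴴ * W with hPdef
  set Q : Matrix (Fin n) (Fin n) ℂ := Xᴴ * U with hQdef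
  have hPmem : P ∈ Matrix.unitaryGroup (Fin n) ℂ := by
    rw [hPdef, ← Matrix.star_eq_conjTranspose]
    exact mul_mem (Unitary.star_mem hV) hW
  have hQmem : Q ∈ Matrix.unitaryGroup (Fin n) ℂ := by
    rw [hQdef, ← Matrix.star_eq_conjTranspose]
    exact mul_mem (Unitary.star_mem hX) hU
  set DA : Matrix (Fin n) (Fin n) ℂ := Matrix.diagonal (fun i => (gA i : ℂ)) with hDA
  set DB : Matrix (Fin n) (Fin n) ℂ := Matrix.diagonal (fun i => (gB i : ℂ)) with hDB
  have htrace : (A * B).trace = ∑ i, ∑ j, (gA i : ℂ) * (P i j * ((gB j : ℂ) * Q j i)) := by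
    have h1 : A * B = U * (DA * (P * (DB * Xᴴ))) := by
      rw [hAeq, hBeq, hPdef]
      simp only [Matrix.mul_assoc]
    rw [h1, Matrix.trace_mul_comm]
    have h2 : DA * (P * (DB * Xᴴ)) * U = DA * (P * (DB * Q)) := by
      rw [hQdef]
      simp only [Matrix.mul_assoc]
    rw [h2]
    rw [Matrix.trace]
    refine Finset.sum_congr rfl fun i _ => ?_
    rw [Matrix.diag_apply, hDA, hDB, Matrix.diagonal_mul, Matrix.mul_apply, Finset.mul_sum]
    refine Finset.sum_congr rfl fun j _ => ?_
    rw [Matrix.diagonal_mul]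
  set DP : Matrix (Fin n) (Fin n) ℝ := Matrix.of fun i j => ‖P i j‖ ^ 2 with hDP
  set DQ : Matrix (Fin n) (Fin n) ℝ := (Matrix.of fun i j => ‖Q i j‖ ^ 2)ᵀ with hDQ
  have hDPmem : DP ∈ doublyStochastic ℝ (Fin n) := vN_unitary_ds hPmem
  have hDQmem : DQ ∈ doublyStochastic ℝ (Fin n) := vN_ds_transpose (vN_unitary_ds hQmem)
  have key1 : ‖(A * B).trace‖ ≤
      (∑ i, ∑ j, gA i * gB j * DP i j + ∑ i, ∑ j, gA i * gB j * DQ i j) / 2 := by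
    rw [htrace]
    calc ‖∑ i, ∑ j, (gA i : ℂ) * (P i j * ((gB j : ℂ) * Q j i))‖
        ≤ ∑ i, ∑ j, ‖(gA i : ℂ) * (P i j * ((gB j : ℂ) * Q j i))‖ := by
          refine (norm_sum_le _ _).trans (Finset.sum_le_sum fun i _ => norm_sum_le _ _)
      _ ≤ ∑ i, ∑ j, (gA i * gB j * DP i j + gA i * gB j * DQ i j) / 2 := by
          refine Finset.sum_le_sum fun i _ => Finset.sum_le_sum fun j _ => ?_
          rw [norm_mul, norm_mul, norm_mul, Complex.norm_real, Complex.norm_real,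
            Real.norm_of_nonneg (hgA0 i), Real.norm_of_nonneg (hgB0 j)]
          have h1 : 0 ≤ ‖P i j‖ := norm_nonneg _
          have h2 : 0 ≤ ‖Q j i‖ := norm_nonneg _
          have hDPij : DP i j = ‖P i j‖ ^ 2 := rfl
          have hDQij : DQ i j = ‖Q j i‖ ^ 2 := rfl
          rw [hDPij, hDQij]
          nlinarith [sq_nonneg (‖P i j‖ - ‖Q j i‖), mul_nonneg (hgA0 i) (hgB0 j),
            mul_nonneg (mul_nonneg (hgA0 i) (hgB0 j)) (sq_nonneg (‖P i j‖ - ‖Q j i‖))]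
      _ = (∑ i, ∑ j, gA i * gB j * DP i j + ∑ i, ∑ j, gA i * gB j * DQ i j) / 2 := by
          refine Eq.symm ?_
          rw [← Finset.sum_add_distrib, Finset.sum_div]
          refine Finset.sum_congr rfl fun i _ => ?_
          rw [← Finset.sum_add_distrib, Finset.sum_div]
  have reix : ∀ (M : Matrix (Fin n) (Fin n) ℝ),
      ∑ i, ∑ j, gA i * gB j * M i j = ∑ i, ∑ j, σA i * σB j * M.submatrix eA eB i j := by
    intro M
    rw [← Equiv.sum_comp eA (fun i => ∑ j, gA i * gB j * M i j)]
    refine Finset.sum_congr rfl fun i _ => ?_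
    rw [← Equiv.sum_comp eB (fun j => gA (eA i) * gB j * M (eA i) j)]
    refine Finset.sum_congr rfl fun j _ => ?_
    rw [hσA i, hσB j]
    rfl
  have bound1 : ∑ i, ∑ j, gA i * gB j * DP i j ≤ ∑ i, σA i * σB i := by
    rw [reix DP]
    exact vN_ds_core hAanti hBanti (vN_ds_submatrix hDPmem eA eB)
  have bound2 : ∑ i, ∑ j, gA i * gB j * DQ i j ≤ ∑ i, σA i * σB i := by
    rw [reix DQ]
    exact vN_ds_core hAanti hBanti (vN_ds_submatrix hDQmem eA eB)
  calc ‖(A * B).trace‖ ≤ _ := key1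
    _ ≤ (∑ i, σA i * σB i + ∑ i, σA i * σB i) / 2 := by
        apply div_le_div_of_nonneg_right ?_ (by norm_num)
        · exact add_le_add bound1 bound2
    _ = ∑ i, σA i * σB i := by ring
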